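/- Let d ≥ 2, μ ≥ 0, η ∈ ℝ^d with |η|² + μ² > 0, and f(η) = √(|η|² + μ²). Fix j ∈ {1,...,d}, write η^{(j)} = (η_1,...,η_{j−1},η_{j+1},...,η_d) ∈ ℝ^{d−1}, and let M(η) = (∂²f/∂η_k∂η_l(η))_{k,l ≠ j} be the corresponding (d−1)×(d−1) submatrix of the Hessian of f. Then η^{(j)} is an eigenvector of M(η): M(η) η^{(j)} = ((η_j² + μ²)(|η|² + μ²)^{−3/2}) η^{(j)}. -/

import Mathlib

/-- The Hessian matrix of `f(η) = √(|η|² + μ²)` at `η`. -/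
noncomputable def hessKG {d : ℕ} (μ : ℝ) (η : Fin d → ℝ) : Matrix (Fin d) (Fin d) ℝ :=
  Matrix.of fun k l =>
    fderiv ℝ
      (fun η' : Fin d → ℝ =>
        fderiv ℝ (fun η'' : Fin d → ℝ => Real.sqrt ((∑ i, η'' i ^ 2) + μ ^ 2)) η'
          (Pi.single l 1))
      η (Pi.single k 1)

/-- The `(d-1)×(d-1)` submatrix of the Hessian of `f(η) = √(|η|² + μ²)` obtained by
deleting the `j`-th row and `j`-th column. -/
noncomputable def hessKGsub {d : ℕ} (μ : ℝ) (η : Fin d → ℝ) (j : Fin d) :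
    Matrix {k : Fin d // k ≠ j} {k : Fin d // k ≠ j} ℝ :=
  Matrix.of fun k l => hessKG μ η (k : Fin d) (l : Fin d)

/-- Derivative of `η ↦ (∑ i, η i ^ 2) + μ ^ 2`. -/
noncomputable def QL {d : ℕ} (η : Fin d → ℝ) : (Fin d → ℝ) →L[ℝ] ℝ :=
  ∑ i, (2 * η i) • (ContinuousLinearMap.proj i : (Fin d → ℝ) →L[ℝ] ℝ)

lemma QL_single {d : ℕ} (η : Fin d → ℝ) (l : Fin d) :
    QL η (Pi.single l 1) = 2 * η l := by
  simp [QL, Pi.single_apply]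

lemma hasFDerivAt_Q {d : ℕ} (μ : ℝ) (η : Fin d → ℝ) :
    HasFDerivAt (fun η' : Fin d → ℝ => (∑ i, η' i ^ 2) + μ ^ 2) (QL η) η := by
  have h : HasFDerivAt (fun η' : Fin d → ℝ => ∑ i, η' i ^ 2) (QL η) η := by
    refine HasFDerivAt.fun_sum fun i _ => ?_
    have hp : HasFDerivAt (fun η' : Fin d → ℝ => η' i)
        (ContinuousLinearMap.proj (R := ℝ) (φ := fun _ : Fin d => ℝ) i) η := hasFDerivAt_apply i η
    have h2 := hp.fun_mul hp
    have hder : (2 * η i) • (ContinuousLinearMap.proj i : (Fin d → ℝ) →L[ℝ] ℝ)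
        = η i • (ContinuousLinearMap.proj i : (Fin d → ℝ) →L[ℝ] ℝ)
          + η i • (ContinuousLinearMap.proj i : (Fin d → ℝ) →L[ℝ] ℝ) := by
      rw [two_mul, add_smul]
    rw [hder]
    simpa [pow_two] using h2
  simpa using h.add_const (μ ^ 2)

lemma hasFDerivAt_sqrtQ {d : ℕ} (μ : ℝ) (η : Fin d → ℝ)
    (hQ : 0 < (∑ i, η i ^ 2) + μ ^ 2) :
    HasFDerivAt (fun η'' : Fin d → ℝ => Real.sqrt ((∑ i, η'' i ^ 2) + μ ^ 2))
      ((1 / (2 * Real.sqrt ((∑ i, η i ^ 2) + μ ^ 2))) • QL η) η :=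
  (Real.hasDerivAt_sqrt hQ.ne').comp_hasFDerivAt η (hasFDerivAt_Q μ η)

lemma fderiv_inner_eq {d : ℕ} (μ : ℝ) (η' : Fin d → ℝ)
    (hQ : 0 < (∑ i, η' i ^ 2) + μ ^ 2) (l : Fin d) :
    fderiv ℝ (fun η'' : Fin d → ℝ => Real.sqrt ((∑ i, η'' i ^ 2) + μ ^ 2)) η'
        (Pi.single l 1)
      = η' l * (Real.sqrt ((∑ i, η' i ^ 2) + μ ^ 2))⁻¹ := by
  have hs : Real.sqrt ((∑ i, η' i ^ 2) + μ ^ 2) ≠ 0 := by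
    positivity
  rw [(hasFDerivAt_sqrtQ μ η' hQ).fderiv]
  simp only [ContinuousLinearMap.coe_smul', Pi.smul_apply, QL_single, smul_eq_mul]
  field_simp

lemma hessKG_apply {d : ℕ} (μ : ℝ) (η : Fin d → ℝ)
    (hQ : 0 < (∑ i, η i ^ 2) + μ ^ 2) (k l : Fin d) :
    hessKG μ η k l = (if k = l then 1 else 0) / Real.sqrt ((∑ i, η i ^ 2) + μ ^ 2)
      - η k * η l / (Real.sqrt ((∑ i, η i ^ 2) + μ ^ 2) * ((∑ i, η i ^ 2) + μ ^ 2)) := by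
  classical
  set Q : ℝ := (∑ i, η i ^ 2) + μ ^ 2 with hQdef
  have hs : Real.sqrt Q ≠ 0 := by positivity
  have hQne : Q ≠ 0 := hQ.ne'
  -- the inner fderiv agrees with an explicit function near η
  have hopen : IsOpen {η' : Fin d → ℝ | 0 < (∑ i, η' i ^ 2) + μ ^ 2} := by
    have hcont : Continuous fun η' : Fin d → ℝ => (∑ i, η' i ^ 2) + μ ^ 2 := by
      fun_prop
    exact isOpen_lt continuous_const hcont
  have hmem : {η' : Fin d → ℝ | 0 < (∑ i, η' i ^ 2) + μ ^ 2} ∈ nhds η :=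
    hopen.mem_nhds hQ
  have hev : (fun η' : Fin d → ℝ =>
      fderiv ℝ (fun η'' : Fin d → ℝ => Real.sqrt ((∑ i, η'' i ^ 2) + μ ^ 2)) η'
        (Pi.single l 1))
      =ᶠ[nhds η]
      fun η' : Fin d → ℝ => η' l * (Real.sqrt ((∑ i, η' i ^ 2) + μ ^ 2))⁻¹ :=
    Filter.eventually_of_mem hmem fun η' hη' => fderiv_inner_eq μ η' hη' l
  -- derivative of the explicit function
  have hinv : HasFDerivAt (fun η' : Fin d → ℝ => (Real.sqrt ((∑ i, η' i ^ 2) + μ ^ 2))⁻¹)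
      ((-(Real.sqrt Q ^ 2)⁻¹) • ((1 / (2 * Real.sqrt Q)) • QL η)) η :=
    (hasDerivAt_inv hs).comp_hasFDerivAt η (hasFDerivAt_sqrtQ μ η hQ)
  have hproj : HasFDerivAt (fun η' : Fin d → ℝ => η' l)
      (ContinuousLinearMap.proj (R := ℝ) (φ := fun _ : Fin d => ℝ) l) η := hasFDerivAt_apply l η
  have hD := hproj.fun_mul hinv
  have : hessKG μ η k l =
      (η l • ((-(Real.sqrt Q ^ 2)⁻¹) • ((1 / (2 * Real.sqrt Q)) • QL η))
        + (Real.sqrt Q)⁻¹ • (ContinuousLinearMap.proj l : (Fin d → ℝ) →L[ℝ] ℝ))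
        ((Pi.single k 1 : Fin d → ℝ)) := by
    show fderiv ℝ _ η (Pi.single k 1) = _
    rw [hev.fderiv_eq, hD.fderiv]
  rw [this]
  have hsq : Real.sqrt Q ^ 2 = Q := Real.sq_sqrt hQ.le
  have hsingle : (Pi.single k (1:ℝ) : Fin d → ℝ) l = if k = l then 1 else 0 := by
    simp [Pi.single_apply, eq_comm]
  simp only [ContinuousLinearMap.add_apply, ContinuousLinearMap.coe_smul', Pi.smul_apply,
    QL_single, smul_eq_mul, hsq, ContinuousLinearMap.proj_apply, hsingle]
  rcases eq_or_ne k l with h | h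
  · simp only [if_pos h]
    field_simp
    ring
  · simp only [if_neg h]
    field_simp
    ring

/-- **Eigenvector identity for the reduced Hessian of the Klein–Gordon symbol**:
`η^{(j)}` is an eigenvector of `M(η)` with eigenvalue `(η_j² + μ²)(|η|² + μ²)^{-3/2}`. -/
theorem stmt_9 (d : ℕ) (hd : 2 ≤ d) (μ : ℝ) (hμ : 0 ≤ μ) (η : Fin d → ℝ)
    (hQ : 0 < (∑ i, η i ^ 2) + μ ^ 2) (j : Fin d) :
    (hessKGsub μ η j).mulVec (fun k => η (k : Fin d)) =
      ((η j ^ 2 + μ ^ 2) * ((∑ i, η i ^ 2) + μ ^ 2) ^ (-(3 : ℝ) / 2)) •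
        fun k : {k : Fin d // k ≠ j} => η (k : Fin d) := by
  classical
  set S : ℝ := ∑ i, η i ^ 2 with hS
  set Q : ℝ := S + μ ^ 2 with hQdef
  have hs : (0:ℝ) < Real.sqrt Q := Real.sqrt_pos.mpr hQ
  have hQne : Q ≠ 0 := hQ.ne'
  have hrpow : Q ^ (-(3 : ℝ) / 2) = (Real.sqrt Q * Q)⁻¹ := by
    rw [show (-(3:ℝ)/2) = -(3/2 : ℝ) by norm_num, Real.rpow_neg hQ.le,
      show ((3:ℝ)/2) = 1/2 + 1 by norm_num, Real.rpow_add hQ, Real.rpow_one,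
      ← Real.sqrt_eq_rpow]
  funext k
  have hk : (k : Fin d) ≠ j := k.2
  -- expand the mulVec as a sum over the erased index set
  have hsum : (hessKGsub μ η j).mulVec (fun k => η (k : Fin d)) k
      = ∑ l ∈ Finset.univ.erase j, hessKG μ η (k : Fin d) l * η l := by
    rw [Matrix.mulVec]
    simp only [dotProduct, hessKGsub, Matrix.of_apply]
    exact (Finset.sum_subtype _ (fun x => by simp) fun l => hessKG μ η (k : Fin d) l * η l).symm
  rw [hsum]
  have hterm : ∀ l ∈ Finset.univ.erase j,
      hessKG μ η (k : Fin d) l * η l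
        = (if (k : Fin d) = l then η l / Real.sqrt Q else 0)
          - η (k : Fin d) * η l ^ 2 / (Real.sqrt Q * Q) := by
    intro l _
    rw [hessKG_apply μ η hQ]
    by_cases h : (k : Fin d) = l <;> simp [h] <;> ring
  rw [Finset.sum_congr rfl hterm, Finset.sum_sub_distrib]
  have h1 : ∑ l ∈ Finset.univ.erase j,
      (if (k : Fin d) = l then η l / Real.sqrt Q else 0) = η (k : Fin d) / Real.sqrt Q := by
    rw [Finset.sum_ite_eq]
    simp [hk]
  have h2 : ∑ l ∈ Finset.univ.erase j,
      η (k : Fin d) * η l ^ 2 / (Real.sqrt Q * Q)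
      = η (k : Fin d) * (S - η j ^ 2) / (Real.sqrt Q * Q) := by
    rw [← Finset.sum_div, ← Finset.mul_sum]
    congr 2
    have h3 : (∑ l ∈ Finset.univ.erase j, η l ^ 2) + η j ^ 2 = S := by
      exact Finset.sum_erase_add Finset.univ (fun l => η l ^ 2) (Finset.mem_univ j)
    linarith
  rw [h1, h2, hrpow]
  simp only [Pi.smul_apply, smul_eq_mul]
  field_simp
  ring
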